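/- For any finite d-regular graph G, the maximum cut of G has size at most (1/2 + |λ_n|/(2d))·|E|, where λ_n is the smallest eigenvalue of the adjacency matrix of G. -/

import Mathlib

open Matrix Finset

/-- The edges of `G` crossing the cut `(S, Sᶜ)`. -/
def cutOf {V : Type*} [Fintype V] [DecidableEq V] (G : SimpleGraph V)
    [DecidableRel G.Adj] (S : Finset V) : Finset (Sym2 V) :=
  G.edgeFinset.filter (fun e => ∃ u v, e = s(u, v) ∧ u ∈ S ∧ v ∉ S)

lemma rayleigh_lb {V : Type*} [Fintype V] [DecidableEq V] (A : Matrix V V ℝ)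
    (hA : A.IsHermitian) (μ : ℝ) (hμ : ∀ i, μ ≤ hA.eigenvalues i) (x : V → ℝ) :
    μ * (x ⬝ᵥ x) ≤ x ⬝ᵥ A *ᵥ x := by
  set U : Matrix V V ℝ := (hA.eigenvectorUnitary : Matrix V V ℝ) with hU
  have hspec := hA.spectral_theorem
  set y : V → ℝ := star U *ᵥ x with hy
  have hUs : U * star U = 1 := hA.eigenvectorUnitary.2.2
  have hxU : x ᵥ* U = y := by
    rw [hy, ← mulVec_transpose]
    congr 1
  have h1 : x ⬝ᵥ A *ᵥ x = ∑ i, hA.eigenvalues i * (y i * y i) := by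
    conv_lhs => rw [hspec, Unitary.conjStarAlgAut_apply]
    rw [← mulVec_mulVec, ← mulVec_mulVec, dotProduct_mulVec, hxU]
    simp [dotProduct, mulVec_diagonal]
    congr 1; ext i; ring
  have h2 : x ⬝ᵥ x = ∑ i, y i * y i := by
    have : x ⬝ᵥ x = y ⬝ᵥ y := by
      rw [hy, dotProduct_mulVec, ← mulVec_transpose]
      have hsU : (star U)ᵀ = U := by
        rw [star_eq_conjTranspose, conjTranspose_eq_transpose_of_trivial, transpose_transpose]
      rw [hsU, mulVec_mulVec, hUs, one_mulVec]
    simpa [dotProduct] using this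
  rw [h1, h2, Finset.mul_sum]
  apply Finset.sum_le_sum
  intro i _
  have : 0 ≤ y i * y i := mul_self_nonneg _
  nlinarith [hμ i]

lemma cut_card_eq {V : Type*} [Fintype V] [DecidableEq V] (G : SimpleGraph V)
    [DecidableRel G.Adj] (S : Finset V) :
    ((Finset.univ.filter (fun p : V × V => G.Adj p.1 p.2 ∧ p.1 ∈ S ∧ p.2 ∉ S)).card : ℕ)
      = (cutOf G S).card := by
  apply Finset.card_bij (fun p _ => s(p.1, p.2))
  · rintro ⟨u, v⟩ hp
    simp only [mem_filter, Finset.mem_univ, true_and] at hp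
    simp only [cutOf, mem_filter, SimpleGraph.mem_edgeFinset, SimpleGraph.mem_edgeSet]
    exact ⟨hp.1, u, v, rfl, hp.2.1, hp.2.2⟩
  · rintro ⟨u, v⟩ hp ⟨u', v'⟩ hp' h
    simp only [mem_filter, Finset.mem_univ, true_and] at hp hp'
    simp only [Sym2.eq, Sym2.rel_iff', Prod.mk.injEq, Prod.swap_prod_mk] at h
    rcases h with ⟨h1, h2⟩ | ⟨h1, h2⟩
    · simp [h1, h2]
    · exact absurd (h1 ▸ hp.2.1) hp'.2.2
  · intro e he
    simp only [cutOf, mem_filter, SimpleGraph.mem_edgeFinset, SimpleGraph.mem_edgeSet] at he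
    obtain ⟨hadj, u, v, rfl, hu, hv⟩ := he
    refine ⟨(u, v), ?_, rfl⟩
    simp only [mem_filter, Finset.mem_univ, true_and]
    exact ⟨(G.mem_edgeSet).mp hadj, hu, hv⟩

theorem stmt_14 {V : Type*} [Fintype V] [DecidableEq V] (G : SimpleGraph V)
    [DecidableRel G.Adj] (d : ℕ) (hd : 0 < d) (hreg : ∀ v, G.degree v = d)
    (hA : (G.adjMatrix ℝ).IsHermitian) (μ : ℝ)
    (hμmem : ∃ i, μ = hA.eigenvalues i)
    (hμmin : ∀ i, μ ≤ hA.eigenvalues i)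
    (S : Finset V) :
    ((cutOf G S).card : ℝ) ≤ (1 / 2 + |μ| / (2 * d)) * G.edgeFinset.card := by
  classical
  set x : V → ℝ := fun v => if v ∈ S then 1 else -1 with hxdef
  set T : Finset (V × V) :=
    Finset.univ.filter (fun p : V × V => G.Adj p.1 p.2 ∧ p.1 ∈ S ∧ p.2 ∉ S) with hT
  set n : ℕ := Fintype.card V with hn
  set E : ℕ := G.edgeFinset.card with hE
  -- sum of adjacency matrix entries = 2E
  have hsumA : ∑ u, ∑ v, (G.adjMatrix ℝ) u v = 2 * E := by
    have : ∀ u, ∑ v, (G.adjMatrix ℝ) u v = (G.degree u : ℝ) := by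
      intro u
      simp [SimpleGraph.adjMatrix_apply, SimpleGraph.degree,
        SimpleGraph.neighborFinset_eq_filter, Finset.sum_boole]
    rw [Finset.sum_congr rfl (fun u _ => this u)]
    rw [← Nat.cast_sum]
    rw [SimpleGraph.sum_degrees_eq_twice_card_edges]
    push_cast
    ring
  -- x ⬝ x = n
  have hxx : x ⬝ᵥ x = (n : ℝ) := by
    have : ∀ v, x v * x v = 1 := by
      intro v; by_cases h : v ∈ S <;> simp [hxdef, h]
    simp [dotProduct, this, hn, Finset.card_univ]
  -- quadratic form identity
  have hquad : x ⬝ᵥ (G.adjMatrix ℝ) *ᵥ x = 2 * E - 4 * T.card := by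
    have hpt : ∀ u v, x u * ((G.adjMatrix ℝ) u v * x v)
        = (G.adjMatrix ℝ) u v
          - 2 * (if G.Adj u v ∧ u ∈ S ∧ v ∉ S then (1:ℝ) else 0)
          - 2 * (if G.Adj v u ∧ v ∈ S ∧ u ∉ S then (1:ℝ) else 0) := by
      intro u v
      by_cases h : G.Adj u v
      · have h' : G.Adj v u := h.symm
        by_cases hu : u ∈ S <;> by_cases hv : v ∈ S <;>
          simp [hxdef, h, h', hu, hv] <;> ring
      · have h' : ¬ G.Adj v u := fun hc => h hc.symm
        simp [hxdef, h, h']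
    have hI1 : ∑ u, ∑ v, (if G.Adj u v ∧ u ∈ S ∧ v ∉ S then (1:ℝ) else 0) = T.card := by
      have e1 : ∑ u, ∑ v, (if G.Adj u v ∧ u ∈ S ∧ v ∉ S then (1:ℝ) else 0)
          = ∑ p : V × V, (if G.Adj p.1 p.2 ∧ p.1 ∈ S ∧ p.2 ∉ S then (1:ℝ) else 0) :=
        (Fintype.sum_prod_type (fun p : V × V => if G.Adj p.1 p.2 ∧ p.1 ∈ S ∧ p.2 ∉ S then (1:ℝ) else 0)).symm
      rw [e1, Finset.sum_boole]
    have hI2 : ∑ u, ∑ v, (if G.Adj v u ∧ v ∈ S ∧ u ∉ S then (1:ℝ) else 0) = T.card := by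
      rw [Finset.sum_comm]
      exact hI1
    have : x ⬝ᵥ (G.adjMatrix ℝ) *ᵥ x = ∑ u, ∑ v, x u * ((G.adjMatrix ℝ) u v * x v) := by
      simp [dotProduct, mulVec, Finset.mul_sum]
    rw [this, Finset.sum_congr rfl (fun u _ => Finset.sum_congr rfl (fun v _ => hpt u v))]
    simp only [Finset.sum_sub_distrib, ← Finset.mul_sum]
    rw [hsumA, hI1, hI2]
    ring
  -- d * n = 2E
  have hdn : (d : ℝ) * n = 2 * E := by
    have := SimpleGraph.sum_degrees_eq_twice_card_edges G
    rw [Finset.sum_congr rfl (fun v _ => hreg v), Finset.sum_const, Finset.card_univ,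
      smul_eq_mul] at this
    have h2 : ((Fintype.card V * d : ℕ) : ℝ) = ((2 * G.edgeFinset.card : ℕ) : ℝ) := by
      exact_mod_cast congrArg (Nat.cast : ℕ → ℝ) this
    push_cast at h2
    rw [hn, hE]
    linarith
  -- eigenvalue bound
  have hray := rayleigh_lb (G.adjMatrix ℝ) hA μ hμmin x
  rw [hxx, hquad] at hray
  -- cut card
  have hcut : (cutOf G S).card = T.card := (cut_card_eq G S).symm
  rw [hcut]
  have hdpos : (0:ℝ) < d := by exact_mod_cast hd
  have habs : μ ≥ -|μ| := neg_abs_le μ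
  have hnn : (0:ℝ) ≤ n := Nat.cast_nonneg n
  have key : (T.card : ℝ) ≤ (2 * E + |μ| * n) / 4 := by nlinarith
  have hrhs : (1 / 2 + |μ| / (2 * d)) * E = (2 * E + |μ| * n) / 4 := by
    field_simp
    linear_combination (-2*|μ|) * hdn
  rw [hrhs]
  exact key
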